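/- The order of the symplectic group Sp(2n, F_2) equals 2^{n^2} · ∏_{j=1}^n (4^j − 1). -/

import Mathlib

open Matrix Finset

def Omega (n : ℕ) : Matrix (Fin n ⊕ Fin n) (Fin n ⊕ Fin n) (ZMod 2) :=
  Matrix.fromBlocks 0 1 1 0

namespace SympCard

variable {n : ℕ}

abbrev V (n : ℕ) := (Fin n ⊕ Fin n) → ZMod 2

def B (n : ℕ) (u v : V n) : ZMod 2 := u ⬝ᵥ (Omega n).mulVec v

lemma omega_mulVec (v : V n) : (Omega n).mulVec v = fun a => v a.swap := by
  funext a
  cases a with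
  | inl i => simp [Omega, mulVec, dotProduct, fromBlocks, Fintype.sum_sum_type, one_apply,
      Finset.sum_ite_eq']
  | inr i => simp [Omega, mulVec, dotProduct, fromBlocks, Fintype.sum_sum_type, one_apply,
      Finset.sum_ite_eq']

lemma B_eq (u v : V n) : B n u v = ∑ a, u a * v a.swap := by
  rw [B, omega_mulVec]; rfl

lemma B_symm (u v : V n) : B n u v = B n v u := by
  rw [B_eq, B_eq]
  refine Fintype.sum_equiv (Equiv.sumComm (Fin n) (Fin n)) _ _ fun a => ?_
  cases a <;> simp [mul_comm]

lemma B_self (u : V n) : B n u u = 0 := by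
  rw [B_eq]
  rw [Fintype.sum_sum_type]
  simp only [Sum.swap_inl, Sum.swap_inr]
  rw [← Finset.sum_add_distrib]
  refine Finset.sum_eq_zero fun i _ => ?_
  rw [mul_comm]
  exact CharTwo.add_self_eq_zero _

lemma B_add_right (u v w : V n) : B n u (v + w) = B n u v + B n u w := by
  simp [B_eq, mul_add, Finset.sum_add_distrib]

lemma B_smul_right (c : ZMod 2) (u v : V n) : B n u (c • v) = c * B n u v := by
  simp [B_eq, Finset.mul_sum, mul_left_comm, mul_add]

lemma B_zero_right (u : V n) : B n u 0 = 0 := by simp [B_eq]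

lemma B_sub_right (u v w : V n) : B n u (v - w) = B n u v - B n u w := by
  have h := B_add_right u (v - w) w
  simp only [sub_add_cancel] at h
  rw [h]; ring

lemma B_sum_right {ι : Type*} (s : Finset ι) (u : V n) (f : ι → V n) :
    B n u (∑ i ∈ s, f i) = ∑ i ∈ s, B n u (f i) := by
  classical
  induction s using Finset.induction with
  | empty => simp [B_zero_right]
  | insert a s h ih => simp [Finset.sum_insert h, B_add_right, ih]

lemma B_nondeg (e : V n) (he : e ≠ 0) : ∃ u, B n e u = 1 := by
  obtain ⟨j, hj⟩ : ∃ j, e j ≠ 0 := by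
    by_contra h; push_neg at h; exact he (funext fun j => h j)
  refine ⟨Pi.single j.swap 1, ?_⟩
  rw [B_eq]
  rw [Finset.sum_eq_single j]
  · rw [Pi.single_eq_same, mul_one]
    rcases (by decide : ∀ x : ZMod 2, x = 0 ∨ x = 1) (e j) with h | h
    · exact absurd h hj
    · exact h
  · intro b _ hb
    rw [Pi.single_eq_of_ne (fun h => hb (by simpa using congrArg Sum.swap h)), mul_zero]
  · intro h; exact absurd (Finset.mem_univ j) h

/-- `v` is orthogonal to all vectors of the partial system `g`. -/
def Perp {m : ℕ} (g : Fin m → V n × V n) (v : V n) : Prop :=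
  ∀ i, B n (g i).1 v = 0 ∧ B n (g i).2 v = 0

/-- `g` is a partial symplectic system. -/
def IsSymp {m : ℕ} (g : Fin m → V n × V n) : Prop :=
  ∀ i j, B n (g i).1 (g j).1 = 0 ∧ B n (g i).2 (g j).2 = 0 ∧
    B n (g i).1 (g j).2 = if i = j then 1 else 0

/-- The linear (additive) map sending `v` to its pairings with all vectors of `g`. -/
def Psi {m : ℕ} (g : Fin m → V n × V n) :
    V n →+ (Fin m → ZMod 2) × (Fin m → ZMod 2) :=
  AddMonoidHom.mk' (fun v => (fun i => B n (g i).1 v, fun i => B n (g i).2 v))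
    (by intro x y; ext i <;> simp [B_add_right])

/-- Section of `Psi`. -/
def sec {m : ℕ} (g : Fin m → V n × V n) (ab : (Fin m → ZMod 2) × (Fin m → ZMod 2)) : V n :=
  (∑ i, ab.1 i • (g i).2) + ∑ i, ab.2 i • (g i).1

lemma B_sec_left {m : ℕ} {g : Fin m → V n × V n} (hg : IsSymp g)
    (ab : (Fin m → ZMod 2) × (Fin m → ZMod 2)) (i : Fin m) :
    B n (g i).1 (sec g ab) = ab.1 i := by
  rw [sec, B_add_right, B_sum_right, B_sum_right]
  simp only [B_smul_right]
  have h1 : ∀ j, B n (g i).1 (g j).2 = if i = j then 1 else 0 := fun j => (hg i j).2.2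
  have h2 : ∀ j, B n (g i).1 (g j).1 = 0 := fun j => (hg i j).1
  simp [h1, h2, mul_ite, Finset.sum_ite_eq, eq_comm]

lemma B_sec_right {m : ℕ} {g : Fin m → V n × V n} (hg : IsSymp g)
    (ab : (Fin m → ZMod 2) × (Fin m → ZMod 2)) (i : Fin m) :
    B n (g i).2 (sec g ab) = ab.2 i := by
  rw [sec, B_add_right, B_sum_right, B_sum_right]
  simp only [B_smul_right]
  have h1 : ∀ j, B n (g i).2 (g j).2 = 0 := fun j => (hg i j).2.1
  have h2 : ∀ j, B n (g i).2 (g j).1 = if j = i then 1 else 0 := by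
    intro j; rw [B_symm]; exact (hg j i).2.2
  simp [h1, h2, mul_ite, Finset.sum_ite_eq, eq_comm]

lemma Psi_sec {m : ℕ} {g : Fin m → V n × V n} (hg : IsSymp g)
    (ab : (Fin m → ZMod 2) × (Fin m → ZMod 2)) : Psi g (sec g ab) = ab := by
  ext i
  · exact B_sec_left hg ab i
  · exact B_sec_right hg ab i

lemma B_perp_sec {m : ℕ} {g : Fin m → V n × V n} {e : V n} (he : Perp g e)
    (ab : (Fin m → ZMod 2) × (Fin m → ZMod 2)) : B n e (sec g ab) = 0 := by
  rw [sec, B_add_right, B_sum_right, B_sum_right]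
  simp only [B_smul_right]
  have h1 : ∀ j, B n e (g j).2 = 0 := fun j => B_symm _ _ ▸ (he j).2
  have h2 : ∀ j, B n e (g j).1 = 0 := fun j => B_symm _ _ ▸ (he j).1
  simp [h1, h2]

end SympCard

section Fiber

lemma fiber_card {A W : Type*} [AddCommGroup A] [AddCommGroup W] [Finite A] [Finite W]
    (φ : A →+ W) (s : W → A) (hs : ∀ b, φ (s b) = b) (t : W) :
    Nat.card {a : A // φ a = t} * Nat.card W = Nat.card A := by
  classical
  cases nonempty_fintype A
  cases nonempty_fintype W
  have hfib : ∀ t' : W, Nat.card {a : A // φ a = t'} = Nat.card {a : A // φ a = t} := by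
    intro t'
    refine Nat.card_congr ⟨fun x => ⟨x.1 + (s t - s t'), ?_⟩, fun x => ⟨x.1 + (s t' - s t), ?_⟩,
      fun x => ?_, fun x => ?_⟩
    · simp [x.2, hs]
    · simp [x.2, hs]
    · ext; simp; abel
    · ext; simp; abel
  have h1 : Nat.card A = ∑ t' : W, Nat.card {a : A // φ a = t'} := by
    rw [← Nat.card_congr (Equiv.sigmaFiberEquiv φ)]
    rw [Nat.card_eq_fintype_card, Fintype.card_sigma]
    congr 1
    ext t'
    rw [Nat.card_eq_fintype_card]
  rw [h1]
  simp only [hfib]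
  rw [Finset.sum_const, Finset.card_univ, smul_eq_mul, Nat.card_eq_fintype_card (α := W), mul_comm]

end Fiber

namespace SympCard

variable {n : ℕ}

lemma card_V : Nat.card (V n) = 2 ^ (2 * n) := by
  rw [Nat.card_fun]
  simp [Nat.card_eq_fintype_card, two_mul]

lemma card_W (m : ℕ) : Nat.card ((Fin m → ZMod 2) × (Fin m → ZMod 2)) = 2 ^ (2 * m) := by
  rw [Nat.card_prod, Nat.card_fun]
  simp only [Nat.card_eq_fintype_card, ZMod.card, Fintype.card_fin]
  rw [← pow_add, two_mul]

/-- Count of vectors orthogonal to a partial symplectic system. -/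
lemma card_perp {m : ℕ} {g : Fin m → V n × V n} (hg : IsSymp g) (hm : m ≤ n) :
    Nat.card {e : V n // Perp g e} = 2 ^ (2 * (n - m)) := by
  have h0 : Nat.card {e : V n // Perp g e} = Nat.card {e : V n // Psi g e = 0} := by
    refine Nat.card_congr (Equiv.subtypeEquivRight fun e => ?_)
    simp only [Psi, AddMonoidHom.mk'_apply, Prod.mk_eq_zero, Perp, funext_iff, Pi.zero_apply]
    constructor
    · intro h; exact ⟨fun i => (h i).1, fun i => (h i).2⟩
    · intro h i; exact ⟨h.1 i, h.2 i⟩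
  rw [h0]
  have key := fiber_card (Psi g) (sec g) (Psi_sec hg) 0
  rw [card_W, card_V] at key
  have hexp : 2 ^ (2 * (n - m)) * 2 ^ (2 * m) = 2 ^ (2 * n) := by
    rw [← pow_add]; congr 1; omega
  exact Nat.eq_of_mul_eq_mul_right (by positivity) (key.trans hexp.symm)

/-- Count of partners `f` of a fixed nonzero `e` orthogonal to the system. -/
lemma card_partner {m : ℕ} {g : Fin m → V n × V n} (hg : IsSymp g) (hm : m < n)
    {e : V n} (he : Perp g e) (hne : e ≠ 0) :
    Nat.card {f : V n // Perp g f ∧ B n e f = 1} = 2 ^ (2 * (n - m) - 1) := by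
  classical
  let Φ : V n →+ ((Fin m → ZMod 2) × (Fin m → ZMod 2)) × ZMod 2 :=
    AddMonoidHom.mk' (fun v => (Psi g v, B n e v)) (by intro x y; simp [B_add_right, Prod.ext_iff])
  obtain ⟨u, hu⟩ := B_nondeg e hne
  set w1 : V n := u - sec g (fun i => B n (g i).1 u, fun i => B n (g i).2 u) with hw1
  have hPsiw1 : Psi g w1 = 0 := by
    ext i
    · show B n (g i).1 w1 = 0
      rw [hw1, B_sub_right, B_sec_left hg]
      exact sub_self _
    · show B n (g i).2 w1 = 0
      rw [hw1, B_sub_right, B_sec_right hg]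
      exact sub_self _
  have hBew1 : B n e w1 = 1 := by
    rw [hw1, B_sub_right, B_perp_sec he, sub_zero, hu]
  set s : ((Fin m → ZMod 2) × (Fin m → ZMod 2)) × ZMod 2 → V n :=
    fun t => sec g t.1 + t.2 • w1 with hs
  have hsec : ∀ t, Φ (s t) = t := by
    intro t
    have h1 : Psi g (s t) = t.1 := by
      rw [hs]
      simp only [map_add]
      rw [Psi_sec hg]
      have hz : Psi g (t.2 • w1) = 0 := by
        ext i
        · show B n (g i).1 (t.2 • w1) = 0
          rw [B_smul_right]
          have : B n (g i).1 w1 = 0 := congrFun (congrArg Prod.fst hPsiw1) i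
          rw [this, mul_zero]
        · show B n (g i).2 (t.2 • w1) = 0
          rw [B_smul_right]
          have : B n (g i).2 w1 = 0 := congrFun (congrArg Prod.snd hPsiw1) i
          rw [this, mul_zero]
      rw [hz, add_zero]
    have h2 : B n e (s t) = t.2 := by
      rw [hs]
      show B n e (sec g t.1 + t.2 • w1) = t.2
      rw [B_add_right, B_perp_sec he, B_smul_right, hBew1, mul_one, zero_add]
    show (Psi g (s t), B n e (s t)) = t
    rw [h1, h2]
  have h0 : Nat.card {f : V n // Perp g f ∧ B n e f = 1} = Nat.card {f : V n // Φ f = (0, 1)} := by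
    refine Nat.card_congr (Equiv.subtypeEquivRight fun f => ?_)
    show Perp g f ∧ B n e f = 1 ↔ (Psi g f, B n e f) = (0, 1)
    rw [Prod.ext_iff]
    constructor
    · rintro ⟨hp, h1⟩
      refine ⟨?_, h1⟩
      show (fun i => B n (g i).1 f, fun i => B n (g i).2 f) = 0
      ext i
      · exact (hp i).1
      · exact (hp i).2
    · rintro ⟨hp, h1⟩
      refine ⟨fun i => ⟨?_, ?_⟩, h1⟩
      · exact congrFun (congrArg Prod.fst hp) i
      · exact congrFun (congrArg Prod.snd hp) i
  rw [h0]
  have key := fiber_card Φ s hsec (0, 1)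
  rw [Nat.card_prod, card_W, card_V, Nat.card_zmod] at key
  have h2 : (2:ℕ)^(2*m) * 2 = 2^(2*m+1) := by ring
  rw [h2] at key
  have hexp : (2:ℕ) ^ (2*(n-m)-1) * 2^(2*m+1) = 2^(2*n) := by rw [← pow_add]; congr 1; omega
  exact Nat.eq_of_mul_eq_mul_right (by positivity) (key.trans hexp.symm)

end SympCard

namespace SympCard

variable {n : ℕ}

/-- Extension condition for a new pair. -/
def Ext {m : ℕ} (g : Fin m → V n × V n) (p : V n × V n) : Prop :=
  Perp g p.1 ∧ Perp g p.2 ∧ B n p.1 p.2 = 1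

lemma card_ext {m : ℕ} {g : Fin m → V n × V n} (hg : IsSymp g) (hm : m < n) :
    Nat.card {p : V n × V n // Ext g p} =
      (2 ^ (2 * (n - m)) - 1) * 2 ^ (2 * (n - m) - 1) := by
  classical
  -- split into choice of e then f
  have e1 : {p : V n × V n // Ext g p} ≃
      Σ e : {e : V n // Perp g e}, {f : V n // Perp g f ∧ B n e.1 f = 1} :=
    { toFun := fun p => ⟨⟨p.1.1, p.2.1⟩, ⟨p.1.2, p.2.2.1, p.2.2.2⟩⟩
      invFun := fun q => ⟨(q.1.1, q.2.1), q.1.2, q.2.2.1, q.2.2.2⟩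
      left_inv := fun p => rfl
      right_inv := fun q => rfl }
  rw [Nat.card_congr e1]
  haveI : ∀ e : {e : V n // Perp g e}, Fintype {f : V n // Perp g f ∧ B n e.1 f = 1} := by
    intro e; infer_instance
  rw [Nat.card_eq_fintype_card, Fintype.card_sigma]
  -- the zero vector is in the base
  have hzero : Perp g (0 : V n) := fun i => ⟨B_zero_right _, B_zero_right _⟩
  set z : {e : V n // Perp g e} := ⟨0, hzero⟩ with hz
  have hcard : ∀ e : {e : V n // Perp g e},
      Fintype.card {f : V n // Perp g f ∧ B n e.1 f = 1} =
        if e = z then 0 else 2 ^ (2 * (n - m) - 1) := by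
    intro e
    by_cases h : e = z
    · rw [if_pos h]
      rw [Fintype.card_eq_zero_iff]
      constructor
      rintro ⟨f, hf1, hf2⟩
      rw [h] at hf2
      rw [show (z.1 : V n) = 0 from rfl] at hf2
      rw [show B n (0 : V n) f = 0 by rw [B_symm]; exact B_zero_right f] at hf2
      exact absurd hf2 (by decide)
    · rw [if_neg h]
      rw [← Nat.card_eq_fintype_card]
      refine card_partner hg hm e.2 ?_
      intro h0
      exact h (Subtype.ext h0)
  simp only [hcard]
  rw [← Finset.sum_erase_add _ _ (Finset.mem_univ z), if_pos rfl, add_zero]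
  rw [Finset.sum_congr rfl (fun x hx => if_neg (Finset.mem_erase.1 hx).1)]
  rw [Finset.sum_const, Finset.card_erase_of_mem (Finset.mem_univ z), Finset.card_univ,
    smul_eq_mul]
  congr 2
  rw [← Nat.card_eq_fintype_card, card_perp hg hm.le]

end SympCard

namespace SympCard

variable {n : ℕ}

lemma isSymp_snoc {m : ℕ} {g : Fin m → V n × V n} {p : V n × V n} :
    IsSymp (Fin.snoc g p : Fin (m+1) → V n × V n) ↔ IsSymp g ∧ Ext g p := by
  constructor
  · intro h
    refine ⟨fun i j => ?_, fun i => ?_, fun i => ?_, ?_⟩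
    · have := h i.castSucc j.castSucc
      simpa [Fin.snoc_castSucc, Fin.castSucc_inj] using this
    · have h1 := h i.castSucc (Fin.last m)
      have h2 := h (Fin.last m) i.castSucc
      simp only [Fin.snoc_castSucc, Fin.snoc_last] at h1 h2
      exact ⟨h1.1, by rw [B_symm]; exact h2.2.2.trans (if_neg (Fin.castSucc_lt_last i).ne')⟩
    · have h1 := h i.castSucc (Fin.last m)
      simp only [Fin.snoc_castSucc, Fin.snoc_last] at h1
      exact ⟨h1.2.2.trans (if_neg (Fin.castSucc_lt_last i).ne), h1.2.1⟩
    · have h1 := h (Fin.last m) (Fin.last m)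
      simp only [Fin.snoc_last] at h1
      exact h1.2.2.trans (by simp)
  · rintro ⟨hg, hp1, hp2, hB⟩
    intro i j
    induction i using Fin.lastCases with
    | last =>
      induction j using Fin.lastCases with
      | last =>
        simp only [Fin.snoc_last]
        exact ⟨B_self _, B_self _, by simpa using hB⟩
      | cast j =>
        simp only [Fin.snoc_last, Fin.snoc_castSucc]
        refine ⟨by rw [B_symm]; exact (hp1 j).1, by rw [B_symm]; exact (hp2 j).2, ?_⟩
        rw [if_neg (Fin.castSucc_lt_last j).ne']
        rw [B_symm]; exact (hp1 j).2
    | cast i =>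
      induction j using Fin.lastCases with
      | last =>
        simp only [Fin.snoc_last, Fin.snoc_castSucc]
        refine ⟨(hp1 i).1, (hp2 i).2, ?_⟩
        rw [if_neg (Fin.castSucc_lt_last i).ne]
        exact (hp2 i).1
      | cast j =>
        simp only [Fin.snoc_castSucc]
        have := hg i j
        simpa [Fin.castSucc_inj] using this

lemma card_isSymp : ∀ m : ℕ, m ≤ n →
    Nat.card {g : Fin m → V n × V n // IsSymp g} =
      ∏ j ∈ Finset.range m, ((2 ^ (2 * (n - j)) - 1) * 2 ^ (2 * (n - j) - 1)) := by
  intro m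
  induction m with
  | zero =>
    intro _
    rw [Finset.range_zero, Finset.prod_empty]
    haveI : Unique {g : Fin 0 → V n × V n // IsSymp g} :=
      { default := ⟨fun i => i.elim0, fun i => i.elim0⟩
        uniq := fun g => Subtype.ext (funext fun i => i.elim0) }
    exact Nat.card_unique
  | succ m ih =>
    intro hm
    classical
    have key : ∀ (h : Fin (m+1) → V n × V n), IsSymp h →
        IsSymp (Fin.init h) ∧ Ext (Fin.init h) (h (Fin.last m)) := fun h hh =>
      isSymp_snoc.mp (by rwa [Fin.snoc_init_self])
    have e1 : {g : Fin (m+1) → V n × V n // IsSymp g} ≃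
        Σ g : {g : Fin m → V n × V n // IsSymp g}, {p : V n × V n // Ext g.1 p} :=
      { toFun := fun h => ⟨⟨Fin.init h.1, (key h.1 h.2).1⟩, ⟨h.1 (Fin.last m), (key h.1 h.2).2⟩⟩
        invFun := fun q => ⟨Fin.snoc q.1.1 q.2.1, isSymp_snoc.mpr ⟨q.1.2, q.2.2⟩⟩
        left_inv := fun h => Subtype.ext (Fin.snoc_init_self h.1)
        right_inv := fun q => by
          rcases q with ⟨⟨g, hgs⟩, p, hps⟩
          have h1 : Fin.init (Fin.snoc g p : Fin (m+1) → V n × V n) = g := by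
            funext i; simp [Fin.init]
          have h2 : (Fin.snoc g p : Fin (m+1) → V n × V n) (Fin.last m) = p := Fin.snoc_last _ _
          refine Sigma.ext (Subtype.ext h1) ?_
          rw [Subtype.heq_iff_coe_eq (fun x => by simp only [Fin.init] at h1 ⊢; rw [h1])]
          exact h2 }
    rw [Nat.card_congr e1, Nat.card_eq_fintype_card, Fintype.card_sigma]
    have hc : ∀ g : {g : Fin m → V n × V n // IsSymp g},
        Fintype.card {p : V n × V n // Ext g.1 p} =
          (2 ^ (2 * (n - m)) - 1) * 2 ^ (2 * (n - m) - 1) := fun g => by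
      rw [← Nat.card_eq_fintype_card, card_ext g.2 (by omega)]
    simp only [hc]
    rw [Finset.sum_const, Finset.card_univ, smul_eq_mul, ← Nat.card_eq_fintype_card,
      ih (by omega), Finset.prod_range_succ]

end SympCard

namespace SympCard

variable {n : ℕ}

lemma cond_iff (M : Matrix (Fin n ⊕ Fin n) (Fin n ⊕ Fin n) (ZMod 2)) :
    Mᵀ * Omega n * M = Omega n ↔
      ∀ k l, B n (fun j => M j k) (fun j => M j l) = Omega n k l := by
  have hentry : ∀ k l, (Mᵀ * Omega n * M) k l = B n (fun j => M j k) (fun j => M j l) := by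
    intro k l
    simp only [B, Matrix.mul_apply, Matrix.transpose_apply, mulVec, dotProduct,
      Finset.sum_mul, Finset.mul_sum]
    rw [Finset.sum_comm]
    exact Finset.sum_congr rfl fun a _ => Finset.sum_congr rfl fun b _ => by ring
  rw [← Matrix.ext_iff]
  exact forall_congr' fun k => forall_congr' fun l => by rw [hentry]

def matEquiv (n : ℕ) :
    {M : Matrix (Fin n ⊕ Fin n) (Fin n ⊕ Fin n) (ZMod 2) // Mᵀ * Omega n * M = Omega n} ≃
      {g : Fin n → V n × V n // IsSymp g} where
  toFun M := ⟨fun i => (fun j => M.1 j (Sum.inl i), fun j => M.1 j (Sum.inr i)), by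
    have h := (cond_iff M.1).mp M.2
    intro i j
    refine ⟨?_, ?_, ?_⟩
    · have := h (Sum.inl i) (Sum.inl j); simpa [Omega, fromBlocks] using this
    · have := h (Sum.inr i) (Sum.inr j); simpa [Omega, fromBlocks] using this
    · have := h (Sum.inl i) (Sum.inr j); simpa [Omega, fromBlocks, one_apply] using this⟩
  invFun g := ⟨Matrix.of fun j k =>
      Sum.rec (fun i => (g.1 i).1 j) (fun i => (g.1 i).2 j) k, by
    apply (cond_iff _).mpr
    intro k l
    cases k with
    | inl i =>
      cases l with
      | inl j =>
        show B n (g.1 i).1 (g.1 j).1 = Omega n (Sum.inl i) (Sum.inl j)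
        rw [(g.2 i j).1]; simp [Omega, fromBlocks]
      | inr j =>
        show B n (g.1 i).1 (g.1 j).2 = Omega n (Sum.inl i) (Sum.inr j)
        rw [(g.2 i j).2.2]; simp [Omega, fromBlocks, one_apply]
    | inr i =>
      cases l with
      | inl j =>
        show B n (g.1 i).2 (g.1 j).1 = Omega n (Sum.inr i) (Sum.inl j)
        rw [B_symm, (g.2 j i).2.2]; simp [Omega, fromBlocks, one_apply, eq_comm]
      | inr j =>
        show B n (g.1 i).2 (g.1 j).2 = Omega n (Sum.inr i) (Sum.inr j)
        rw [(g.2 i j).2.1]; simp [Omega, fromBlocks]⟩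
  left_inv M := Subtype.ext (by
    funext j k
    cases k with
    | inl i => rfl
    | inr i => rfl)
  right_inv g := Subtype.ext (by funext i; rfl)

lemma sum_odd (n : ℕ) : ∑ j ∈ Finset.Icc 1 n, (2 * j - 1) = n ^ 2 := by
  induction n with
  | zero => simp
  | succ n ih =>
    rw [Finset.sum_Icc_succ_top (by omega), ih]
    ring_nf
    omega

lemma arith (n : ℕ) :
    ∏ j ∈ Finset.range n, ((2 ^ (2 * (n - j)) - 1) * 2 ^ (2 * (n - j) - 1)) =
      2 ^ (n ^ 2) * ∏ j ∈ Finset.Icc 1 n, (4 ^ j - 1) := by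
  have step1 : ∏ j ∈ Finset.range n, ((2 ^ (2 * (n - j)) - 1) * 2 ^ (2 * (n - j) - 1)) =
      ∏ j ∈ Finset.Icc 1 n, ((2 ^ (2 * j) - 1) * 2 ^ (2 * j - 1)) := by
    rw [← Finset.Ico_add_one_right_eq_Icc, Finset.prod_Ico_eq_prod_range]
    rw [show n + 1 - 1 = n from rfl]
    rw [show (∏ j ∈ Finset.range n, ((2 ^ (2 * (n - j)) - 1) * 2 ^ (2 * (n - j) - 1))) =
        ∏ j ∈ Finset.range n,
          (fun j => ((2 : ℕ) ^ (2 * (j + 1)) - 1) * 2 ^ (2 * (j + 1) - 1)) (n - 1 - j) from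
      Finset.prod_congr rfl fun j hj => by
        have := Finset.mem_range.mp hj
        congr 3 <;> omega]
    refine (Finset.prod_range_reflect
      (fun j => ((2 : ℕ) ^ (2 * (j + 1)) - 1) * 2 ^ (2 * (j + 1) - 1)) n).trans ?_
    exact Finset.prod_congr rfl fun j _ => by congr 3 <;> omega
  rw [step1, Finset.prod_mul_distrib, Finset.prod_pow_eq_pow_sum, sum_odd, mul_comm]
  congr 1
  exact Finset.prod_congr rfl fun j _ => by rw [pow_mul]; norm_num

end SympCard

theorem card_symplectic_group (n : ℕ) :
    Nat.card {M : Matrix (Fin n ⊕ Fin n) (Fin n ⊕ Fin n) (ZMod 2) //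
        Mᵀ * Omega n * M = Omega n} =
      2 ^ (n ^ 2) * ∏ j ∈ Finset.Icc 1 n, (4 ^ j - 1) := by
  rw [Nat.card_congr (SympCard.matEquiv n), SympCard.card_isSymp n le_rfl, SympCard.arith]
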